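/- Let h denote the binary entropy function h(q) = −q·log₂(q) − (1−q)·log₂(1−q) (with h(0)=h(1)=0), and define G : [3/4, (2+√2)/4] → ℝ by G(x) = 1 − h(1/2 + (1/2)·√(16x² − 16x + 3)). Then for every x_t ∈ (3/4, (2+√2)/4) and every x ∈ [3/4, (2+√2)/4], G(x) ≥ G(x_t) + G′(x_t)·(x − x_t), where G′(x_t) denotes the derivative of G at x_t. -/

import Mathlib

open Real Set

/-- The binary entropy function `h(q) = −q·log₂ q − (1−q)·log₂(1−q)`
(with the conventions `h 0 = h 1 = 0`, which hold automatically since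
`Real.logb 2 0 = 0`). -/
noncomputable def binaryEntropy (q : ℝ) : ℝ :=
  -q * Real.logb 2 q - (1 - q) * Real.logb 2 (1 - q)

/-- The single-round entropy bound of the CHSH-based protocol, as a function of
the CHSH winning probability `x ∈ [3/4, (2+√2)/4]`. -/
noncomputable def chshEntropyBound (x : ℝ) : ℝ :=
  1 - binaryEntropy (1 / 2 + (1 / 2) * Real.sqrt (16 * x ^ 2 - 16 * x + 3))

lemma chshEntropyBound_eq :
    chshEntropyBound = fun x =>
      1 - Real.binEntropy (1 / 2 + (1 / 2) * Real.sqrt (16 * x ^ 2 - 16 * x + 3)) / Real.log 2 := by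
  funext x
  simp only [chshEntropyBound, binaryEntropy, Real.binEntropy, Real.logb, Real.log_inv]
  ring

/-- first derivative formula -/
noncomputable def chshD1 (x : ℝ) : ℝ :=
  (8 * x - 4) *
      (Real.log (1 + Real.sqrt (16 * x ^ 2 - 16 * x + 3)) -
        Real.log (1 - Real.sqrt (16 * x ^ 2 - 16 * x + 3))) /
    (Real.sqrt (16 * x ^ 2 - 16 * x + 3) * Real.log 2)

section facts

variable {x : ℝ} (hx : x ∈ Set.Ioo (3 / 4 : ℝ) ((2 + Real.sqrt 2) / 4))

lemma s_pos (hx : x ∈ Set.Ioo (3 / 4 : ℝ) ((2 + Real.sqrt 2) / 4)) :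
    0 < 16 * x ^ 2 - 16 * x + 3 := by
  have h1 := hx.1
  nlinarith [hx.1]

lemma s_lt_one (hx : x ∈ Set.Ioo (3 / 4 : ℝ) ((2 + Real.sqrt 2) / 4)) :
    16 * x ^ 2 - 16 * x + 3 < 1 := by
  have h2 : Real.sqrt 2 * Real.sqrt 2 = 2 := Real.mul_self_sqrt (by norm_num)
  have hd : 4 * x - 2 < Real.sqrt 2 := by linarith [hx.2]
  have hg : (0:ℝ) < 4 * x - 2 := by linarith [hx.1]
  nlinarith [mul_self_lt_mul_self hg.le hd]

lemma u_pos (hx : x ∈ Set.Ioo (3 / 4 : ℝ) ((2 + Real.sqrt 2) / 4)) :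
    0 < Real.sqrt (16 * x ^ 2 - 16 * x + 3) := Real.sqrt_pos.2 (s_pos hx)

lemma u_lt_one (hx : x ∈ Set.Ioo (3 / 4 : ℝ) ((2 + Real.sqrt 2) / 4)) :
    Real.sqrt (16 * x ^ 2 - 16 * x + 3) < 1 := by
  have := Real.sqrt_lt_sqrt (s_pos hx).le (s_lt_one hx)
  simpa using this

lemma u_sq (hx : x ∈ Set.Ioo (3 / 4 : ℝ) ((2 + Real.sqrt 2) / 4)) :
    Real.sqrt (16 * x ^ 2 - 16 * x + 3) ^ 2 = 16 * x ^ 2 - 16 * x + 3 :=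
  Real.sq_sqrt (s_pos hx).le

end facts

/-- the log bound : log(1+u) - log(1-u) ≤ 2u/(1-u²) for u ∈ [0,1) -/
lemma log_ratio_le (u : ℝ) (hu0 : 0 ≤ u) (hu1 : u < 1) :
    Real.log (1 + u) - Real.log (1 - u) ≤ 2 * u / (1 - u ^ 2) := by
  set F : ℝ → ℝ := fun v => 2 * v / (1 - v ^ 2) - (Real.log (1 + v) - Real.log (1 - v)) with hF
  have hder : ∀ v ∈ Set.Ioo (-1 : ℝ) 1, HasDerivAt F (4 * v ^ 2 / (1 - v ^ 2) ^ 2) v := by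
    intro v hv
    have h1 : (0:ℝ) < 1 + v := by linarith [hv.1]
    have h2 : (0:ℝ) < 1 - v := by linarith [hv.2]
    have h3 : (1:ℝ) - v ^ 2 ≠ 0 := by nlinarith
    have hq := (((hasDerivAt_id v).const_mul 2).div
        ((((hasDerivAt_id v).pow 2)).const_sub 1) h3)
    have hl1 : HasDerivAt (fun v : ℝ => Real.log (1 + v)) (1 / (1 + v)) v := by
      simpa using (((hasDerivAt_id v).const_add 1).log h1.ne')
    have hl2 : HasDerivAt (fun v : ℝ => Real.log (1 - v)) (-1 / (1 - v)) v := by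
      simpa using (((hasDerivAt_id v).const_sub 1).log h2.ne')
    have := hq.sub (hl1.sub hl2)
    refine this.congr_deriv ?_
    simp only [Pi.pow_apply, id]
    field_simp
    ring
  have hmono : MonotoneOn F (Set.Ico (0:ℝ) 1) := by
    apply monotoneOn_of_deriv_nonneg (convex_Ico 0 1)
    · intro v hv
      exact (hder v ⟨by linarith [hv.1], hv.2⟩).continuousAt.continuousWithinAt
    · intro v hv
      rw [interior_Ico] at hv
      exact ((hder v ⟨by linarith [hv.1], hv.2⟩).differentiableAt).differentiableWithinAt
    · intro v hv
      rw [interior_Ico] at hv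
      rw [(hder v ⟨by linarith [hv.1], hv.2⟩).deriv]
      positivity
  have h0 : F 0 = 0 := by simp [hF]
  have := hmono (Set.left_mem_Ico.2 one_pos) ⟨hu0, hu1⟩ hu0
  rw [h0] at this
  simpa [hF] using this

lemma hasDerivAt_chsh {x : ℝ} (hx : x ∈ Set.Ioo (3 / 4 : ℝ) ((2 + Real.sqrt 2) / 4)) :
    HasDerivAt chshEntropyBound (chshD1 x) x := by
  set u := Real.sqrt (16 * x ^ 2 - 16 * x + 3) with hu
  have hu0 := u_pos hx
  have hu1 := u_lt_one hx
  have hs0 := s_pos hx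
  have hL : Real.log 2 ≠ 0 := by
    have := Real.log_pos (by norm_num : (1:ℝ) < 2); linarith
  -- derivative of inner polynomial
  have hs : HasDerivAt (fun x : ℝ => 16 * x ^ 2 - 16 * x + 3) (32 * x - 16) x := by
    have h := (((hasDerivAt_id x).pow 2).const_mul 16).sub ((hasDerivAt_id x).const_mul 16)
    have h2 := h.add_const 3
    refine h2.congr_deriv ?_
    simp; ring
  have hsq : HasDerivAt (fun x : ℝ => Real.sqrt (16 * x ^ 2 - 16 * x + 3))
      ((32 * x - 16) / (2 * u)) x := hs.sqrt hs0.ne'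
  have hq : HasDerivAt (fun x : ℝ => 1 / 2 + 1 / 2 * Real.sqrt (16 * x ^ 2 - 16 * x + 3))
      (1 / 2 * ((32 * x - 16) / (2 * u))) x := (hsq.const_mul (1/2)).const_add (1/2)
  -- binEntropy composed
  set q : ℝ := 1 / 2 + 1 / 2 * u with hqdef
  have hq0 : q ≠ 0 := by rw [hqdef]; nlinarith
  have hq1 : q ≠ 1 := by rw [hqdef]; nlinarith
  have hb := (Real.hasDerivAt_binEntropy hq0 hq1).comp x hq
  have hG : HasDerivAt chshEntropyBound
      (-((Real.log (1 - q) - Real.log q) * (1 / 2 * ((32 * x - 16) / (2 * u))) / Real.log 2)) x := by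
    rw [chshEntropyBound_eq]
    exact (hb.div_const (Real.log 2)).const_sub 1
  convert hG using 1
  have e1 : q = (1 + u) / 2 := by rw [hqdef]; ring
  have e2 : (1 : ℝ) - q = (1 - u) / 2 := by rw [hqdef]; ring
  have l1 : Real.log q = Real.log (1 + u) - Real.log 2 := by
    rw [e1, Real.log_div (by linarith) (by norm_num)]
  have l2 : Real.log (1 - q) = Real.log (1 - u) - Real.log 2 := by
    rw [e2, Real.log_div (by linarith) (by norm_num)]
  rw [chshD1, l1, l2, ← hu]
  field_simp
  ring

/-- clean second-derivative expression -/
noncomputable def chshD2 (x : ℝ) : ℝ :=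
  (16 * (Real.sqrt (16 * x ^ 2 - 16 * x + 3) ^ 2 + 1) /
        (1 - Real.sqrt (16 * x ^ 2 - 16 * x + 3) ^ 2) -
      8 * (Real.log (1 + Real.sqrt (16 * x ^ 2 - 16 * x + 3)) -
          Real.log (1 - Real.sqrt (16 * x ^ 2 - 16 * x + 3))) /
        Real.sqrt (16 * x ^ 2 - 16 * x + 3)) /
    (Real.sqrt (16 * x ^ 2 - 16 * x + 3) ^ 2 * Real.log 2)

lemma d2_eq (t u B L : ℝ) (hu : 0 < u) (hu1 : u < 1) (hL : L ≠ 0)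
    (hkey : t ^ 2 = 4 * (u ^ 2 + 1)) :
    (16 * (u ^ 2 + 1) / (1 - u ^ 2) - 8 * B / u) / (u ^ 2 * L) =
      ((8 * B + t * (4 * t / (2 * u) / (1 + u) - -(4 * t / (2 * u)) / (1 - u))) * (u * L) -
          t * B * (4 * t / (2 * u) * L)) / (u * L) ^ 2 := by
  have h1 : (0:ℝ) < 1 + u := by linarith
  have h2 : (0:ℝ) < 1 - u := by linarith
  have h3 : (1:ℝ) - u ^ 2 ≠ 0 := by nlinarith
  have e1 : t * (4 * t / (2 * u) / (1 + u) - -(4 * t / (2 * u)) / (1 - u)) =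
      t ^ 2 * (4 / (u * ((1 + u) * (1 - u)))) := by
    field_simp
    ring
  have e2 : t * B * (4 * t / (2 * u) * L) = t ^ 2 * (2 * B * L / u) := by
    field_simp
    ring
  rw [e1, e2, hkey]
  field_simp
  ring

lemma chshD2_nonneg {x : ℝ} (hx : x ∈ Set.Ioo (3 / 4 : ℝ) ((2 + Real.sqrt 2) / 4)) :
    0 ≤ chshD2 x := by
  set u := Real.sqrt (16 * x ^ 2 - 16 * x + 3) with hu
  have hu0 := u_pos hx
  have hu1 := u_lt_one hx
  have h1u2 : (0:ℝ) < 1 - u ^ 2 := by nlinarith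
  have hB := log_ratio_le u hu0.le hu1
  have hB2 : (Real.log (1 + u) - Real.log (1 - u)) * (1 - u ^ 2) ≤ 2 * u :=
    (le_div_iff₀ h1u2).mp hB
  rw [chshD2, ← hu]
  apply div_nonneg
  · rw [sub_nonneg, div_le_div_iff₀ hu0 h1u2]
    nlinarith [hB2, mul_nonneg hu0.le (sq_nonneg u)]
  · exact (mul_pos (pow_pos hu0 2) (Real.log_pos one_lt_two)).le

lemma hasDerivAt_chshD1 {x : ℝ} (hx : x ∈ Set.Ioo (3 / 4 : ℝ) ((2 + Real.sqrt 2) / 4)) :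
    HasDerivAt chshD1 (chshD2 x) x := by
  set u := Real.sqrt (16 * x ^ 2 - 16 * x + 3) with hu
  have hu0 := u_pos hx
  have hu1 := u_lt_one hx
  have hs0 := s_pos hx
  have hL : (0:ℝ) < Real.log 2 := Real.log_pos one_lt_two
  have hs : HasDerivAt (fun x : ℝ => 16 * x ^ 2 - 16 * x + 3) (32 * x - 16) x := by
    have h := ((((hasDerivAt_id x).pow 2).const_mul 16).sub ((hasDerivAt_id x).const_mul 16)).add_const 3
    refine h.congr_deriv ?_
    simp; ring
  have hsq : HasDerivAt (fun x : ℝ => Real.sqrt (16 * x ^ 2 - 16 * x + 3))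
      ((32 * x - 16) / (2 * u)) x := hs.sqrt hs0.ne'
  have hlin : HasDerivAt (fun x : ℝ => 8 * x - 4) 8 x := by
    simpa using ((hasDerivAt_id x).const_mul 8).sub_const 4
  have hlog1 : HasDerivAt (fun x : ℝ => Real.log (1 + Real.sqrt (16 * x ^ 2 - 16 * x + 3)))
      (((32 * x - 16) / (2 * u)) / (1 + u)) x :=
    (hsq.const_add 1).log (by rw [← hu]; linarith)
  have hlog2 : HasDerivAt (fun x : ℝ => Real.log (1 - Real.sqrt (16 * x ^ 2 - 16 * x + 3)))
      ((-((32 * x - 16) / (2 * u))) / (1 - u)) x :=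
    (hsq.const_sub 1).log (by rw [← hu]; linarith)
  have hnum := hlin.mul (hlog1.sub hlog2)
  have hden : HasDerivAt (fun x : ℝ => Real.sqrt (16 * x ^ 2 - 16 * x + 3) * Real.log 2)
      ((32 * x - 16) / (2 * u) * Real.log 2) x := hsq.mul_const _
  have hfull := hnum.div hden (by rw [← hu]; positivity)
  have hkey : (8 * x - 4) ^ 2 = 4 * (u ^ 2 + 1) := by
    have h2 := u_sq hx
    rw [← hu] at h2
    linear_combination -4 * h2
  have h32 : (32 * x - 16 : ℝ) = 4 * (8 * x - 4) := by ring
  refine hfull.congr_deriv ?_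
  rw [chshD2, ← hu, h32]
  exact (d2_eq (8 * x - 4) u _ _ hu0 hu1 hL.ne' hkey).symm

lemma chsh_convex :
    ConvexOn ℝ (Set.Icc (3 / 4 : ℝ) ((2 + Real.sqrt 2) / 4)) chshEntropyBound := by
  apply convexOn_of_hasDerivWithinAt2_nonneg (f' := chshD1) (f'' := chshD2)
    (convex_Icc _ _)
  · rw [chshEntropyBound_eq]
    exact (continuous_const.sub ((Real.binEntropy_continuous.comp
      (by continuity)).div_const _)).continuousOn
  · intro y hy
    rw [interior_Icc] at hy
    exact (hasDerivAt_chsh hy).hasDerivWithinAt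
  · intro y hy
    rw [interior_Icc] at hy
    exact (hasDerivAt_chshD1 hy).hasDerivWithinAt
  · intro y hy
    rw [interior_Icc] at hy
    exact chshD2_nonneg hy

/-- Tangent-line inequality underlying the construction of the min-tradeoff
function: for every `x_t ∈ (3/4, (2+√2)/4)` and every `x ∈ [3/4, (2+√2)/4]`,
`G(x) ≥ G(x_t) + G′(x_t)·(x − x_t)`. -/
theorem chshEntropyBound_tangent_line_le
    (xt : ℝ) (hxt : xt ∈ Set.Ioo (3 / 4 : ℝ) ((2 + Real.sqrt 2) / 4))
    (x : ℝ) (hx : x ∈ Set.Icc (3 / 4 : ℝ) ((2 + Real.sqrt 2) / 4)) :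
    chshEntropyBound x ≥
      chshEntropyBound xt + deriv chshEntropyBound xt * (x - xt) := by
  have hda := hasDerivAt_chsh hxt
  have hd : deriv chshEntropyBound xt = chshD1 xt := hda.deriv
  have hxtIcc : xt ∈ Set.Icc (3 / 4 : ℝ) ((2 + Real.sqrt 2) / 4) := ⟨hxt.1.le, hxt.2.le⟩
  rcases lt_trichotomy x xt with hlt | heq | hgt
  · have h := chsh_convex.slope_le_of_hasDerivAt hx hxtIcc hlt hda
    rw [slope_def_field, div_le_iff₀ (by linarith)] at h
    rw [hd, show x - xt = -(xt - x) by ring, mul_neg]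
    linarith
  · subst heq; simp
  · have h := chsh_convex.le_slope_of_hasDerivAt hxtIcc hx hgt hda
    rw [slope_def_field, le_div_iff₀ (by linarith)] at h
    rw [hd]
    linarith
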